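/- The split interval (double-arrow space) is not fragmentable: let K = [0,1] × {0,1} be ordered lexicographically and equipped with its order topology; then there is no quasi metric d on K that fragments K. -/

import Mathlib

universe u

open Set Topology

/-- A quasi metric: symmetric, nonnegative, vanishing exactly on the diagonal
(the triangle inequality may fail). -/
def IsQuasiMetric {K : Type u} (d : K → K → ℝ) : Prop :=
  (∀ x y, 0 ≤ d x y) ∧ (∀ x y, d x y = d y x) ∧ (∀ x y, d x y = 0 ↔ x = y)

/-- `d` fragments `K`: every nonempty closed set has a relatively open nonempty
subset of `d`-diameter less than any prescribed `ε > 0`. -/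
def Fragments {K : Type u} [TopologicalSpace K] (d : K → K → ℝ) : Prop :=
  ∀ L : Set K, L.Nonempty → IsClosed L → ∀ ε : ℝ, 0 < ε →
    ∃ U : Set K, IsOpen U ∧ (U ∩ L).Nonempty ∧
      ∀ x ∈ U ∩ L, ∀ y ∈ U ∩ L, d x y < ε

/-- `K` is almost totally disconnected: it embeds into `[0,1]^Γ` so that every
point has all but countably many coordinates in `{0,1}`. -/
def AlmostTotallyDisconnected (K : Type u) [TopologicalSpace K] : Prop :=
  ∃ (Γ : Type u) (f : K → Γ → ℝ),
    Topology.IsEmbedding f ∧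
    (∀ x γ, f x γ ∈ Set.Icc (0:ℝ) 1) ∧
    (∀ x : K, {γ : Γ | f x γ ∉ ({0, 1} : Set ℝ)}.Countable)

/-- The split interval: `[0,1] × {0,1}` with the lexicographic order. -/
abbrev SplitInterval : Type := Lex (Set.Icc (0:ℝ) 1 × Bool)

/-- The order topology on the split interval. -/
noncomputable instance : TopologicalSpace SplitInterval := Preorder.topology SplitInterval

instance : OrderTopology SplitInterval := ⟨rfl⟩

section SplitIntervalAux

open Filter

private lemma countable_badL (A : Set ℝ) (hA : A ⊆ Set.Icc 0 1) (q : ℝ) :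
    {x | x ∈ A ∧ q < x ∧ (Set.Ioo q x ∩ A).Countable}.Countable := by
  set B := {x | x ∈ A ∧ q < x ∧ (Set.Ioo q x ∩ A).Countable} with hB
  rcases B.eq_empty_or_nonempty with h | h
  · simp [h]
  have hbdd : BddAbove B := ⟨1, fun x hx => (hA hx.1).2⟩
  obtain ⟨u, hmono, htend, hmem⟩ := exists_seq_tendsto_sSup h hbdd
  have hsub : B ⊆ {sSup B} ∪ ⋃ n, (Set.Ioo q (u n) ∩ A) := by
    intro x hx
    rcases eq_or_lt_of_le (le_csSup hbdd hx) with he | hlt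
    · exact Or.inl he
    · obtain ⟨n, hn⟩ := (htend.eventually (eventually_gt_nhds hlt)).exists
      exact Or.inr (Set.mem_iUnion.2 ⟨n, ⟨hx.2.1, hn⟩, hx.1⟩)
  exact ((Set.countable_singleton _).union
    (Set.countable_iUnion fun n => (hmem n).2.2)).mono hsub

private lemma countable_badR (A : Set ℝ) (hA : A ⊆ Set.Icc 0 1) (q : ℝ) :
    {x | x ∈ A ∧ x < q ∧ (Set.Ioo x q ∩ A).Countable}.Countable := by
  set B := {x | x ∈ A ∧ x < q ∧ (Set.Ioo x q ∩ A).Countable} with hB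
  rcases B.eq_empty_or_nonempty with h | h
  · simp [h]
  have hbdd : BddBelow B := ⟨0, fun x hx => (hA hx.1).1⟩
  obtain ⟨u, hmono, htend, hmem⟩ := exists_seq_tendsto_sInf h hbdd
  have hsub : B ⊆ {sInf B} ∪ ⋃ n, (Set.Ioo (u n) q ∩ A) := by
    intro x hx
    rcases eq_or_lt_of_le (csInf_le hbdd hx) with he | hlt
    · exact Or.inl he.symm
    · obtain ⟨n, hn⟩ := (htend.eventually (eventually_lt_nhds hlt)).exists
      exact Or.inr (Set.mem_iUnion.2 ⟨n, ⟨hn, hx.2.1⟩, hx.1⟩)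
  exact ((Set.countable_singleton _).union
    (Set.countable_iUnion fun n => (hmem n).2.2)).mono hsub

private lemma exists_condensation (A : Set ℝ) (hA : A ⊆ Set.Icc 0 1)
    (hunc : ¬ A.Countable) :
    ∃ A₀ : Set ℝ, A₀ ⊆ A ∧ ¬ A₀.Countable ∧
      (∀ x ∈ A₀, ∀ a, a < x → (A₀ ∩ Set.Ioo a x).Nonempty) ∧
      (∀ x ∈ A₀, ∀ b, x < b → (A₀ ∩ Set.Ioo x b).Nonempty) := by
  set Bad : Set ℝ :=
    (⋃ q : ℚ, {x | x ∈ A ∧ (q : ℝ) < x ∧ (Set.Ioo (q : ℝ) x ∩ A).Countable}) ∪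
    (⋃ q : ℚ, {x | x ∈ A ∧ x < (q : ℝ) ∧ (Set.Ioo x (q : ℝ) ∩ A).Countable}) with hBad
  have hBadc : Bad.Countable :=
    (Set.countable_iUnion fun q : ℚ => countable_badL A hA (q:ℝ)).union
    (Set.countable_iUnion fun q : ℚ => countable_badR A hA (q:ℝ))
  refine ⟨A \ Bad, Set.diff_subset, ?_, ?_, ?_⟩
  · intro h
    exact hunc ((h.union hBadc).mono (fun x hx => by
      by_cases hb : x ∈ Bad
      · exact Or.inr hb
      · exact Or.inl ⟨hx, hb⟩))
  · rintro x ⟨hxA, hxB⟩ a ha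
    obtain ⟨q, hq1, hq2⟩ := exists_rat_btwn ha
    have hnc : ¬ (Set.Ioo (q : ℝ) x ∩ A).Countable := by
      intro hc
      exact hxB (Or.inl (Set.mem_iUnion.2 ⟨q, hxA, hq2, hc⟩))
    have : ((Set.Ioo (q : ℝ) x ∩ A) \ Bad).Nonempty := by
      by_contra hne
      rw [Set.not_nonempty_iff_eq_empty, Set.diff_eq_empty] at hne
      exact hnc (hBadc.mono hne)
    obtain ⟨y, ⟨hy1, hy2⟩, hy3⟩ := this
    exact ⟨y, ⟨hy2, hy3⟩, lt_trans hq1 hy1.1, hy1.2⟩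
  · rintro x ⟨hxA, hxB⟩ b hb
    obtain ⟨q, hq1, hq2⟩ := exists_rat_btwn hb
    have hnc : ¬ (Set.Ioo x (q : ℝ) ∩ A).Countable := by
      intro hc
      exact hxB (Or.inr (Set.mem_iUnion.2 ⟨q, hxA, hq1, hc⟩))
    have : ((Set.Ioo x (q : ℝ) ∩ A) \ Bad).Nonempty := by
      by_contra hne
      rw [Set.not_nonempty_iff_eq_empty, Set.diff_eq_empty] at hne
      exact hnc (hBadc.mono hne)
    obtain ⟨y, ⟨hy1, hy2⟩, hy3⟩ := this
    exact ⟨y, ⟨hy2, hy3⟩, hy1.1, lt_trans hy1.2 hq2⟩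
end SplitIntervalAux

/-- The split interval is not fragmentable: no quasi metric fragments it. -/
theorem splitInterval_not_fragmentable
    (d : SplitInterval → SplitInterval → ℝ) (hd : IsQuasiMetric d) :
    ¬ Fragments d := by
  obtain ⟨hnn, hsymm, hzero⟩ := hd
  intro hF
  -- positivity of twin distances
  have hgpos : ∀ x : Set.Icc (0:ℝ) 1, 0 < d (toLex (x, false)) (toLex (x, true)) := by
    intro x
    rcases lt_or_eq_of_le (hnn (toLex (x, false)) (toLex (x, true))) with h | h
    · exact h
    · exfalso
      have h2 := (hzero _ _).1 h.symm
      have h3 : ((x, false) : Set.Icc (0:ℝ) 1 × Bool) = (x, true) := toLex.injective h2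
      simpa using congrArg Prod.snd h3
  -- an uncountable level set
  set A : ℕ → Set ℝ := fun n =>
    {x | x ∈ Set.Ioo (0:ℝ) 1 ∧ ∃ h : x ∈ Set.Icc (0:ℝ) 1,
      1 / (n + 1) ≤ d (toLex (⟨x, h⟩, false)) (toLex (⟨x, h⟩, true))} with hA
  have hcov : Set.Icc (0:ℝ) 1 ⊆ {0, 1} ∪ ⋃ n, A n := by
    intro x hx
    by_cases h0 : x = 0
    · exact Or.inl (Or.inl h0)
    by_cases h1 : x = 1
    · exact Or.inl (Or.inr h1)
    have hxIoo : x ∈ Set.Ioo (0:ℝ) 1 :=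
      ⟨lt_of_le_of_ne hx.1 (Ne.symm h0), lt_of_le_of_ne hx.2 h1⟩
    obtain ⟨n, hn⟩ := exists_nat_one_div_lt (hgpos ⟨x, hx⟩)
    exact Or.inr (Set.mem_iUnion.2 ⟨n, hxIoo, hx, hn.le⟩)
  have hIccUnc : ¬ (Set.Icc (0:ℝ) 1).Countable := by
    intro h
    have h2 : (Cardinal.mk (Set.Icc (0:ℝ) 1)) ≤ Cardinal.aleph0 := by
      rw [Cardinal.mk_le_aleph0_iff]
      exact h.to_subtype
    rw [Cardinal.mk_Icc_real one_pos] at h2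
    exact absurd h2 (not_le.2 Cardinal.aleph0_lt_continuum)
  have hexn : ∃ n, ¬ (A n).Countable := by
    by_contra hall
    push_neg at hall
    exact hIccUnc (Set.Countable.mono hcov
      (((Set.countable_singleton 1).insert 0).union
        (Set.countable_iUnion hall)))
  obtain ⟨n, hAn⟩ := hexn
  set ε : ℝ := 1 / (n + 1) with hε
  have hεpos : 0 < ε := by positivity
  have hAsub : A n ⊆ Set.Icc 0 1 := fun x hx => hx.2.1
  obtain ⟨A₀, hA₀sub, hA₀unc, hleft, hright⟩ := exists_condensation (A n) hAsub hAn
  have hA₀ne : A₀.Nonempty := by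
    rw [Set.nonempty_iff_ne_empty]
    intro h
    exact hA₀unc (h ▸ Set.countable_empty)
  -- the closed set of twins
  set S : Set SplitInterval := {p | ((ofLex p).1 : ℝ) ∈ A₀} with hS
  obtain ⟨x₀, hx₀⟩ := hA₀ne
  have hx₀I : x₀ ∈ Set.Icc (0:ℝ) 1 := (hA₀sub hx₀).2.1
  have hLne : (closure S).Nonempty :=
    ⟨toLex (⟨x₀, hx₀I⟩, false), subset_closure hx₀⟩
  obtain ⟨U, hUo, ⟨z, hzU, hzL⟩, hsm⟩ := hF (closure S) hLne isClosed_closure ε hεpos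
  rw [mem_closure_iff] at hzL
  obtain ⟨w, hwU, hwS⟩ := hzL U hUo hzU
  have hxw : ((ofLex w).1 : ℝ) ∈ A₀ := hwS
  have hxIoo : ((ofLex w).1 : ℝ) ∈ Set.Ioo (0:ℝ) 1 := (hA₀sub hxw).1
  have hU : U ∈ nhds w := hUo.mem_nhds hwU
  -- given a twin pair in U, derive the contradiction
  have key : ∀ y : ℝ, y ∈ A₀ → ∀ hy : y ∈ Set.Icc (0:ℝ) 1,
      toLex (⟨y, hy⟩, false) ∈ U → toLex (⟨y, hy⟩, true) ∈ U → False := by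
    intro y hyA₀ hy hf ht
    have hyS0 : toLex ((⟨y, hy⟩ : Set.Icc (0:ℝ) 1), false) ∈ S := hyA₀
    have hyS1 : toLex ((⟨y, hy⟩ : Set.Icc (0:ℝ) 1), true) ∈ S := hyA₀
    have hlt := hsm _ ⟨hf, subset_closure hyS0⟩ _ ⟨ht, subset_closure hyS1⟩
    obtain ⟨-, h', hge⟩ := hA₀sub hyA₀
    have : d (toLex ((⟨y, hy⟩ : Set.Icc (0:ℝ) 1), false)) (toLex (⟨y, hy⟩, true))
        = d (toLex ((⟨y, h'⟩ : Set.Icc (0:ℝ) 1), false)) (toLex (⟨y, h'⟩, true)) := rfl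
    linarith [this ▸ hlt, hge]
  cases hb : (ofLex w).2 with
  | false =>
    have hwmin : ∃ l, l < w := by
      refine ⟨toLex (⟨0, by norm_num⟩, false), ?_⟩
      rw [show w = toLex (ofLex w) from rfl, Prod.Lex.lt_iff]
      exact Or.inl (by exact_mod_cast hxIoo.1)
    obtain ⟨l, hlw, hsubU⟩ := exists_Ioc_subset_of_mem_nhds hU hwmin
    have hla : ((ofLex l).1 : ℝ) < ((ofLex w).1 : ℝ) := by
      rw [show l = toLex (ofLex l) from rfl, show w = toLex (ofLex w) from rfl,
        Prod.Lex.lt_iff] at hlw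
      rcases hlw with h | ⟨-, h⟩
      · exact_mod_cast h
      · rw [ofLex_toLex, ofLex_toLex, hb, Bool.lt_iff] at h
        exact absurd h.2 (by simp)
    obtain ⟨y, hyA₀, hya, hyx⟩ := hleft _ hxw _ hla
    have hyI : y ∈ Set.Icc (0:ℝ) 1 := (hA₀sub hyA₀).2.1
    have hmem : ∀ b : Bool, toLex ((⟨y, hyI⟩ : Set.Icc (0:ℝ) 1), b) ∈ Set.Ioc l w := by
      intro b
      constructor
      · rw [show l = toLex (ofLex l) from rfl, Prod.Lex.lt_iff]
        exact Or.inl (by exact_mod_cast hya)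
      · rw [show w = toLex (ofLex w) from rfl]
        exact le_of_lt (by rw [Prod.Lex.lt_iff]; exact Or.inl (by exact_mod_cast hyx))
    exact key y hyA₀ hyI (hsubU (hmem false)) (hsubU (hmem true))
  | true =>
    have hwmax : ∃ u, w < u := by
      refine ⟨toLex (⟨1, by norm_num⟩, true), ?_⟩
      rw [show w = toLex (ofLex w) from rfl, Prod.Lex.lt_iff]
      exact Or.inl (by exact_mod_cast hxIoo.2)
    obtain ⟨r, hwr, hsubU⟩ := exists_Ico_subset_of_mem_nhds hU hwmax
    have hra : ((ofLex w).1 : ℝ) < ((ofLex r).1 : ℝ) := by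
      rw [show r = toLex (ofLex r) from rfl, show w = toLex (ofLex w) from rfl,
        Prod.Lex.lt_iff] at hwr
      rcases hwr with h | ⟨-, h⟩
      · exact_mod_cast h
      · rw [ofLex_toLex, ofLex_toLex, hb, Bool.lt_iff] at h
        exact absurd h.1 (by simp)
    obtain ⟨y, hyA₀, hyx, hyb⟩ := hright _ hxw _ hra
    have hyI : y ∈ Set.Icc (0:ℝ) 1 := (hA₀sub hyA₀).2.1
    have hmem : ∀ b : Bool, toLex ((⟨y, hyI⟩ : Set.Icc (0:ℝ) 1), b) ∈ Set.Ico w r := by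
      intro b
      constructor
      · rw [show w = toLex (ofLex w) from rfl]
        exact le_of_lt (by rw [Prod.Lex.lt_iff]; exact Or.inl (by exact_mod_cast hyx))
      · rw [show r = toLex (ofLex r) from rfl, Prod.Lex.lt_iff]
        exact Or.inl (by exact_mod_cast hyb)
    exact key y hyA₀ hyI (hsubU (hmem false)) (hsubU (hmem true))
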